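/- arXiv:2312.04088 — 5 statements merged into one kernel-verified Lean document; each statement's English description precedes it below -/
import Mathlib

section
/- Let G be a simple graph with proper coloring c and attribute function A, let δ be a natural number, and let S be a finite vertex set. Then every clique S' of G with S' ⊆ S and |cnt_{S'}(a) − cnt_{S'}(b)| ≤ δ satisfies |S'| ≤ 2·min(|{c(v) : v ∈ S, A(v) = a}|, |{c(v) : v ∈ S, A(v) = b}|) + δ. -/
/-- attribute-color-based upper bound: every clique `S' ⊆ S`
whose attribute counts differ by at most `δ` satisfies
`|S'| ≤ 2 * min(#colors of attribute-a vertices of S, #colors of attribute-b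
vertices of S) + δ`. -/
theorem stmt_7 {V : Type*} [Fintype V] [DecidableEq V]
    (G : SimpleGraph V) [DecidableRel G.Adj]
    (c : V → ℕ) (hc : ∀ u v : V, G.Adj u v → c u ≠ c v)
    (A : V → Bool) (δ : ℕ) (S : Finset V) :
    ∀ S' : Finset V, G.IsClique (S' : Set V) → S' ⊆ S →
      |((S'.filter (fun v => A v = true)).card : ℤ) -
        ((S'.filter (fun v => A v = false)).card : ℤ)| ≤ (δ : ℤ) →
      S'.card ≤
        2 * min ((S.filter (fun v => A v = true)).image c).card
                ((S.filter (fun v => A v = false)).image c).card + δ := by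
  intro S' hclique hsub hdiff
  set na := (S'.filter (fun v => A v = true)).card with hna
  set nb := (S'.filter (fun v => A v = false)).card with hnb
  have hinj : ∀ t : Bool, ∀ u ∈ S'.filter (fun v => A v = t),
      ∀ v ∈ S'.filter (fun v => A v = t), c u = c v → u = v := by
    intro t u hu v hv hcuv
    simp only [Finset.mem_filter] at hu hv
    by_contra hne
    exact hc u v (hclique hu.1 hv.1 hne) hcuv
  have key : ∀ t : Bool, (S'.filter (fun v => A v = t)).card ≤
      ((S.filter (fun v => A v = t)).image c).card := by
    intro t
    calc (S'.filter (fun v => A v = t)).card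
        = ((S'.filter (fun v => A v = t)).image c).card :=
          (Finset.card_image_of_injOn (hinj t)).symm
      _ ≤ ((S.filter (fun v => A v = t)).image c).card :=
          Finset.card_le_card (Finset.image_subset_image
            (Finset.filter_subset_filter _ hsub))
  have hMa := key true
  have hMb := key false
  have hcard : S'.card = na + nb := by
    rw [hna, hnb]
    rw [← Finset.card_filter_add_card_filter_not
      (p := fun v => A v = true)]
    congr 2
    apply Finset.filter_congr
    intro x _
    simp
  rw [hcard]
  have h := abs_le.mp hdiff
  omega
end

section
/- Let G be a simple graph on a finite vertex type and let d be a natural number. If there exists a nonempty finite vertex set T such that every vertex of T has at least d neighbors inside T (i.e., the degeneracy of G is at least d), then at least d + 1 vertices of G have degree at least d; consequently the h-index of G is at least its degeneracy. -/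
/-- The h-index of a graph: the greatest `h` such that at least `h` vertices
have degree at least `h`. -/
noncomputable def hIndex {V : Type*} [Fintype V] (G : SimpleGraph V)
    [DecidableRel G.Adj] : ℕ :=
  sSup {h : ℕ | h ≤ (Finset.univ.filter (fun v => h ≤ G.degree v)).card}

/-- The degeneracy of a graph: the greatest `d` witnessed by a nonempty finite
vertex set `T` all of whose vertices have at least `d` neighbors inside `T`. -/
noncomputable def degeneracy {V : Type*} [Fintype V] (G : SimpleGraph V)
    [DecidableRel G.Adj] : ℕ :=
  sSup {d : ℕ | ∃ T : Finset V, T.Nonempty ∧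
    ∀ v ∈ T, d ≤ (T.filter (fun u => G.Adj v u)).card}

lemma aux_main {V : Type*} [Fintype V] [DecidableEq V]
    (G : SimpleGraph V) [DecidableRel G.Adj] (d : ℕ)
    (hT : ∃ T : Finset V, T.Nonempty ∧
      ∀ v ∈ T, d ≤ (T.filter (fun u => G.Adj v u)).card) :
    d + 1 ≤ (Finset.univ.filter (fun v => d ≤ G.degree v)).card := by
  obtain ⟨T, ⟨v0, hv0⟩, hdeg⟩ := hT
  have hsub : T ⊆ Finset.univ.filter (fun v => d ≤ G.degree v) := by
    intro v hv
    simp only [Finset.mem_filter, Finset.mem_univ, true_and]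
    calc d ≤ (T.filter (fun u => G.Adj v u)).card := hdeg v hv
      _ ≤ (G.neighborFinset v).card := by
          apply Finset.card_le_card
          intro u hu
          simp only [Finset.mem_filter] at hu
          simpa [SimpleGraph.mem_neighborFinset] using hu.2
      _ = G.degree v := (G.card_neighborFinset_eq_degree v)
  have hcard : d + 1 ≤ T.card := by
    have h1 : d ≤ (T.filter (fun u => G.Adj v0 u)).card := hdeg v0 hv0
    have h2 : T.filter (fun u => G.Adj v0 u) ⊆ T.erase v0 := by
      intro u hu
      simp only [Finset.mem_filter] at hu
      exact Finset.mem_erase.2 ⟨fun h => (G.irrefl (h ▸ hu.2)), hu.1⟩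
    have h3 : (T.erase v0).card = T.card - 1 := Finset.card_erase_of_mem hv0
    have h4 : d ≤ T.card - 1 := le_trans h1 (le_trans (Finset.card_le_card h2) h3.le)
    have h5 : 1 ≤ T.card := Finset.card_pos.2 ⟨v0, hv0⟩
    omega
  exact le_trans hcard (Finset.card_le_card hsub)

/-- if there is a nonempty finite vertex set `T` in which every
vertex has at least `d` neighbors inside `T`, then at least `d + 1` vertices of
`G` have degree at least `d`; consequently the h-index of `G` is at least its
degeneracy. -/
theorem stmt_10 {V : Type*} [Fintype V] [DecidableEq V]
    (G : SimpleGraph V) [DecidableRel G.Adj] (d : ℕ)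
    (hT : ∃ T : Finset V, T.Nonempty ∧
      ∀ v ∈ T, d ≤ (T.filter (fun u => G.Adj v u)).card) :
    d + 1 ≤ (Finset.univ.filter (fun v => d ≤ G.degree v)).card ∧
    degeneracy G ≤ hIndex G := by
  refine ⟨aux_main G d hT, ?_⟩
  apply csSup_le'
  intro k hk
  have h1 : k ≤ (Finset.univ.filter (fun v => k ≤ G.degree v)).card :=
    le_trans (Nat.le_succ k) (aux_main G k hk)
  apply le_csSup
  · exact ⟨Fintype.card V, fun n hn => le_trans hn (Finset.card_le_univ _)⟩
  · exact h1
end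

section
/- Let G be a simple graph with proper coloring c and attribute function A, let δ be a natural number, and let S be a clique of G with |cnt_S(a) − cnt_S(b)| ≤ δ. Then for every vertex v ∈ S, |S| ≤ 2·min(D_a(v), D_b(v)) + δ + 2. -/
/-- for a clique `S` whose attribute counts differ by at most
`δ`, every `v ∈ S` satisfies `|S| ≤ 2 * min(D_a(v), D_b(v)) + δ + 2`. -/
theorem stmt_12 {V : Type*} [Fintype V] [DecidableEq V]
    (G : SimpleGraph V) [DecidableRel G.Adj]
    (c : V → ℕ) (hc : ∀ u v : V, G.Adj u v → c u ≠ c v)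
    (A : V → Bool) (δ : ℕ)
    (S : Finset V) (hclique : G.IsClique (S : Set V))
    (hδ : |((S.filter (fun v => A v = true)).card : ℤ) -
            ((S.filter (fun v => A v = false)).card : ℤ)| ≤ (δ : ℤ)) :
    ∀ v ∈ S,
      S.card ≤
        2 * min (((G.neighborFinset v).filter (fun w => A w = true)).image c).card
                (((G.neighborFinset v).filter (fun w => A w = false)).image c).card
          + δ + 2 := by
  intro v hv
  have key : ∀ t : Bool, (S.filter (fun w => A w = t)).card ≤
      (((G.neighborFinset v).filter (fun w => A w = t)).image c).card + 1 := by
    intro t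
    have h1 : ((S.erase v).filter (fun w => A w = t)).card ≤
        (((G.neighborFinset v).filter (fun w => A w = t)).image c).card := by
      apply Finset.card_le_card_of_injOn c
      · intro w hw
        simp only [Finset.mem_coe, Finset.mem_filter, Finset.mem_erase] at hw
        obtain ⟨⟨hwv, hwS⟩, ht⟩ := hw
        have hadj : G.Adj v w := hclique hv hwS (Ne.symm hwv)
        exact Finset.mem_image_of_mem c (by
          simp [SimpleGraph.mem_neighborFinset, hadj, ht])
      · intro w1 h1 w2 h2 hcw
        simp only [Finset.coe_filter, Set.mem_setOf_eq, Finset.mem_erase] at h1 h2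
        by_contra hne
        exact hc w1 w2 (hclique h1.1.2 h2.1.2 hne) hcw
    have h2 : (S.filter (fun w => A w = t)).card ≤
        ((S.erase v).filter (fun w => A w = t)).card + 1 := by
      have hsub : S.filter (fun w => A w = t) ⊆
          insert v ((S.erase v).filter (fun w => A w = t)) := by
        intro w hw
        simp only [Finset.mem_filter] at hw
        rcases eq_or_ne w v with rfl | hne
        · exact Finset.mem_insert_self _ _
        · exact Finset.mem_insert_of_mem (by
            simp [Finset.mem_erase, hne, hw.1, hw.2])
      calc (S.filter (fun w => A w = t)).card ≤ _ := Finset.card_le_card hsub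
        _ ≤ _ := Finset.card_insert_le _ _
    omega
  have hsplit : (S.filter (fun w => A w = true)).card +
      (S.filter (fun w => A w = false)).card = S.card := by
    have := Finset.card_filter_add_card_filter_not
      (s := S) (p := fun w => A w = true)
    simpa using this
  have ka := key true
  have kb := key false
  have habs : ((S.filter (fun v => A v = true)).card : ℤ) -
      ((S.filter (fun v => A v = false)).card : ℤ) ≤ δ ∧
      ((S.filter (fun v => A v = false)).card : ℤ) -
      ((S.filter (fun v => A v = true)).card : ℤ) ≤ δ := by
    rw [abs_le] at hδ
    omega
  obtain ⟨hab1, hab2⟩ := habs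
  omega
end

section
/- Define the colorful core number ccore(v) of a vertex v as the greatest natural number k for which there exists a finite vertex set T containing v such that every u ∈ T has, for each attribute t ∈ {a, b}, at least k distinct values of c among its neighbors within T that have attribute t. Let u be a vertex with maximum colorful core number, i.e., ccore(w) ≤ ccore(u) for all vertices w. Then every clique S of G with |cnt_S(a) − cnt_S(b)| ≤ δ and cnt_S(a) ≥ 1, cnt_S(b) ≥ 1 satisfies |S| ≤ 2·min(D_a(u), D_b(u)) + δ + 2. -/
/-- The colorful core number of a vertex `v`: the greatest `k` for which some
finite vertex set `T` containing `v` has the property that every `u ∈ T` sees,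
for each attribute `t`, at least `k` distinct colors among its neighbors
within `T` having attribute `t`. -/
noncomputable def ccore {V : Type*} [Fintype V] [DecidableEq V]
    (G : SimpleGraph V) [DecidableRel G.Adj]
    (c : V → ℕ) (A : V → Bool) (v : V) : ℕ :=
  sSup {k : ℕ | ∃ T : Finset V, v ∈ T ∧ ∀ u ∈ T, ∀ t : Bool,
    k ≤ ((T.filter (fun w => G.Adj u w ∧ A w = t)).image c).card}

/-- colorful-degeneracy-based upper bound: let `u` be a vertex
with maximum colorful core number.  Then every clique `S` with attribute
counts differing by at most `δ` and containing at least one vertex of each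
attribute satisfies `|S| ≤ 2 * min(D_a(u), D_b(u)) + δ + 2`. -/
theorem stmt_13 {V : Type*} [Fintype V] [DecidableEq V]
    (G : SimpleGraph V) [DecidableRel G.Adj]
    (c : V → ℕ) (hc : ∀ u v : V, G.Adj u v → c u ≠ c v)
    (A : V → Bool) (δ : ℕ)
    (u : V) (hu : ∀ w : V, ccore G c A w ≤ ccore G c A u) :
    ∀ S : Finset V, G.IsClique (S : Set V) →
      |((S.filter (fun v => A v = true)).card : ℤ) -
        ((S.filter (fun v => A v = false)).card : ℤ)| ≤ (δ : ℤ) →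
      1 ≤ (S.filter (fun v => A v = true)).card →
      1 ≤ (S.filter (fun v => A v = false)).card →
      S.card ≤
        2 * min (((G.neighborFinset u).filter (fun w => A w = true)).image c).card
                (((G.neighborFinset u).filter (fun w => A w = false)).image c).card
          + δ + 2 := by
  classical
  intro S hS hd ha hb
  set na := (S.filter (fun v => A v = true)).card with hna
  set nb := (S.filter (fun v => A v = false)).card with hnb
  have hvS : ∃ v, v ∈ S := by
    have : 0 < S.card := lt_of_lt_of_le ha (Finset.card_filter_le _ _)
    exact Finset.card_pos.mp this
  obtain ⟨v, hvS⟩ := hvS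
  have hinj : ∀ w1 ∈ S, ∀ w2 ∈ S, c w1 = c w2 → w1 = w2 := by
    intro w1 h1 w2 h2 hcc
    by_contra hne
    exact hc _ _ (hS h1 h2 hne) hcc
  have key : ∀ w ∈ S, ∀ t : Bool,
      (S.filter (fun x => A x = t)).card - 1 ≤
      ((S.filter (fun x => G.Adj w x ∧ A x = t)).image c).card := by
    intro w hw t
    have hsub : (S.filter (fun x => A x = t)).erase w ⊆
        S.filter (fun x => G.Adj w x ∧ A x = t) := by
      intro x hx
      rw [Finset.mem_erase, Finset.mem_filter] at hx
      rw [Finset.mem_filter]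
      exact ⟨hx.2.1, hS hw hx.2.1 (Ne.symm hx.1), hx.2.2⟩
    calc (S.filter (fun x => A x = t)).card - 1
        ≤ ((S.filter (fun x => A x = t)).erase w).card :=
          Finset.pred_card_le_card_erase
      _ = (((S.filter (fun x => A x = t)).erase w).image c).card := by
          rw [Finset.card_image_of_injOn]
          intro x hx y hy hxy
          exact hinj x (Finset.mem_filter.mp (Finset.mem_of_mem_erase hx)).1
            y (Finset.mem_filter.mp (Finset.mem_of_mem_erase hy)).1 hxy
      _ ≤ _ := Finset.card_le_card (Finset.image_subset_image hsub)
  have hbdd : ∀ x : V, BddAbove {k : ℕ | ∃ T : Finset V, x ∈ T ∧ ∀ u ∈ T, ∀ t : Bool,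
      k ≤ ((T.filter (fun w => G.Adj u w ∧ A w = t)).image c).card} := by
    intro x
    refine ⟨Fintype.card V, ?_⟩
    rintro k ⟨T, hxT, hT⟩
    calc k ≤ ((T.filter (fun w => G.Adj x w ∧ A w = true)).image c).card := hT x hxT true
      _ ≤ (T.filter (fun w => G.Adj x w ∧ A w = true)).card := Finset.card_image_le
      _ ≤ T.card := Finset.card_filter_le _ _
      _ ≤ Fintype.card V := Finset.card_le_univ _
  have hlow : min na nb - 1 ≤ ccore G c A v := by
    apply le_csSup (hbdd v)
    refine ⟨S, hvS, ?_⟩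
    intro w hw t
    refine le_trans ?_ (key w hw t)
    cases t
    · exact Nat.sub_le_sub_right (min_le_right _ _) 1
    · exact Nat.sub_le_sub_right (min_le_left _ _) 1
  have hupp : ∀ t : Bool, ccore G c A u ≤
      (((G.neighborFinset u).filter (fun w => A w = t)).image c).card := by
    intro t
    apply csSup_le' ?_
    rintro k ⟨T, huT, hT⟩
    refine le_trans (hT u huT t) (Finset.card_le_card (Finset.image_subset_image ?_))
    intro x hx
    rw [Finset.mem_filter] at hx ⊢
    exact ⟨(G.mem_neighborFinset u x).mpr hx.2.1, hx.2.2⟩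
  have h1 := le_trans hlow (hu v)
  have h2 := hupp true
  have h3 := hupp false
  have hcardS : na + nb = S.card := by
    rw [hna, hnb]
    have h := Finset.card_filter_add_card_filter_not
      (s := S) (p := fun v => A v = true)
    simpa using h
  have hd1 : (na : ℤ) - nb ≤ δ := le_trans (le_abs_self _) hd
  have hd2 : -(δ : ℤ) ≤ (na : ℤ) - nb := neg_le_of_abs_le hd
  omega
end

section
/- Define the colorful h-index h̄(G) as the greatest natural number h such that at least h vertices v of G satisfy min(D_a(v), D_b(v)) ≥ h. Then every clique S of G with |cnt_S(a) − cnt_S(b)| ≤ δ and cnt_S(a) ≥ 1, cnt_S(b) ≥ 1 satisfies |S| ≤ 2·h̄(G) + δ + 2. -/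
/-- The colorful h-index of a graph: the greatest `h` such that at least `h`
vertices `v` satisfy `min (D_a v) (D_b v) ≥ h`, where `D_t v` is the number of
distinct colors among the neighbors of `v` having attribute `t`. -/
noncomputable def colorfulHIndex {V : Type*} [Fintype V] [DecidableEq V]
    (G : SimpleGraph V) [DecidableRel G.Adj]
    (c : V → ℕ) (A : V → Bool) : ℕ :=
  sSup {h : ℕ | h ≤ (Finset.univ.filter (fun v : V =>
    h ≤ min (((G.neighborFinset v).filter (fun w => A w = true)).image c).card
            (((G.neighborFinset v).filter (fun w => A w = false)).image c).card)).card}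

/-- colorful-h-index-based upper bound: every clique `S` whose
attribute counts differ by at most `δ` and which contains at least one vertex
of each attribute satisfies `|S| ≤ 2 * h̄(G) + δ + 2`. -/
theorem stmt_14 {V : Type*} [Fintype V] [DecidableEq V]
    (G : SimpleGraph V) [DecidableRel G.Adj]
    (c : V → ℕ) (hc : ∀ u v : V, G.Adj u v → c u ≠ c v)
    (A : V → Bool) (δ : ℕ) :
    ∀ S : Finset V, G.IsClique (S : Set V) →
      |((S.filter (fun v => A v = true)).card : ℤ) -
        ((S.filter (fun v => A v = false)).card : ℤ)| ≤ (δ : ℤ) →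
      1 ≤ (S.filter (fun v => A v = true)).card →
      1 ≤ (S.filter (fun v => A v = false)).card →
      S.card ≤ 2 * colorfulHIndex G c A + δ + 2 := by
  intro S hS habs ha hb
  classical
  set na := (S.filter (fun v => A v = true)).card with hna
  set nb := (S.filter (fun v => A v = false)).card with hnb
  set m := min na nb with hm
  have hinj : Set.InjOn c (S : Set V) := by
    intro u hu w hw huw
    by_contra hne
    exact hc u w (hS hu hw hne) huw
  have key : ∀ v ∈ S, ∀ t : Bool,
      (S.filter (fun w => A w = t)).card - 1 ≤
      (((G.neighborFinset v).filter (fun w => A w = t)).image c).card := by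
    intro v hv t
    have hsub : ((S.filter (fun w => A w = t)).erase v) ⊆
        (G.neighborFinset v).filter (fun w => A w = t) := by
      intro w hw
      rw [Finset.mem_erase, Finset.mem_filter] at hw
      rw [Finset.mem_filter, SimpleGraph.mem_neighborFinset]
      exact ⟨(hS hw.2.1 hv hw.1).symm, hw.2.2⟩
    have hsub2 : (((S.filter (fun w => A w = t)).erase v) : Set V) ⊆ (S : Set V) := by
      intro x hx
      simp only [Finset.coe_erase, Set.mem_diff, Finset.coe_filter, Set.mem_setOf_eq] at hx
      exact hx.1.1
    calc (S.filter (fun w => A w = t)).card - 1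
        ≤ ((S.filter (fun w => A w = t)).erase v).card :=
          Finset.pred_card_le_card_erase
      _ = (((S.filter (fun w => A w = t)).erase v).image c).card :=
          (Finset.card_image_of_injOn (hinj.mono hsub2)).symm
      _ ≤ (((G.neighborFinset v).filter (fun w => A w = t)).image c).card :=
          Finset.card_le_card (Finset.image_subset_image hsub)
  have hvS : ∀ v ∈ S, m - 1 ≤
      min (((G.neighborFinset v).filter (fun w => A w = true)).image c).card
          (((G.neighborFinset v).filter (fun w => A w = false)).image c).card := by
    intro v hv
    refine le_min ?_ ?_
    · exact le_trans (Nat.sub_le_sub_right (min_le_left na nb) 1) (key v hv true)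
    · exact le_trans (Nat.sub_le_sub_right (min_le_right na nb) 1) (key v hv false)
  have hSsub : S ⊆ Finset.univ.filter (fun v : V =>
      m - 1 ≤ min (((G.neighborFinset v).filter (fun w => A w = true)).image c).card
          (((G.neighborFinset v).filter (fun w => A w = false)).image c).card) := by
    intro v hv
    exact Finset.mem_filter.mpr ⟨Finset.mem_univ _, hvS v hv⟩
  have hmem : m - 1 ∈ {h : ℕ | h ≤ (Finset.univ.filter (fun v : V =>
      h ≤ min (((G.neighborFinset v).filter (fun w => A w = true)).image c).card
          (((G.neighborFinset v).filter (fun w => A w = false)).image c).card)).card} := by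
    have h1 : m - 1 ≤ na := le_trans (Nat.sub_le _ _) (min_le_left na nb)
    have h2 : na ≤ S.card := Finset.card_filter_le _ _
    exact le_trans (le_trans h1 h2) (Finset.card_le_card hSsub)
  have hbdd : BddAbove {h : ℕ | h ≤ (Finset.univ.filter (fun v : V =>
      h ≤ min (((G.neighborFinset v).filter (fun w => A w = true)).image c).card
          (((G.neighborFinset v).filter (fun w => A w = false)).image c).card)).card} := by
    refine ⟨Fintype.card V, fun h hh => ?_⟩
    exact le_trans hh (le_trans (Finset.card_filter_le _ _) (le_of_eq Finset.card_univ))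
  have hle : m - 1 ≤ colorfulHIndex G c A := le_csSup hbdd hmem
  have hsplit : na + nb = S.card := by
    rw [hna, hnb]
    have : S.filter (fun v => A v = false) = S.filter (fun v => ¬ (A v = true)) := by
      apply Finset.filter_congr
      intro x _
      simp [Bool.not_eq_true]
    rw [this]
    exact Finset.card_filter_add_card_filter_not _
  rw [abs_le] at habs
  obtain ⟨h1, h2⟩ := habs
  have hmin := min_choice na nb
  have hml := min_le_left na nb
  have hmr := min_le_right na nb
  have hZ1 : (na : ℤ) - nb ≤ δ := h2
  have hZ2 : -(δ : ℤ) ≤ (na : ℤ) - nb := h1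
  omega
end
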